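/- Let M ∈ ℝ^{d×d} be symmetric positive semidefinite whose top two eigenvalues satisfy λ₁ > λ₂ ≥ 0, and let f(x) = (1/2)‖xxᵀ − M‖_F². If x† is a stationary point of f (i.e., ∇f(x†) = 0, equivalently M x† = ‖x†‖² x†) with x† ∉ {√λ₁·v₁, −√λ₁·v₁}, then v₁ᵀ ∇²f(x†) v₁ ≤ λ₂ − λ₁ < 0; in particular, every such stationary point is a strict saddle point of f. -/

import Mathlib

open scoped RealInnerProductSpace
open InnerProductSpace

variable {d : ℕ}

noncomputable def Lm (M : Matrix (Fin d) (Fin d) ℝ) :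
    EuclideanSpace ℝ (Fin d) →L[ℝ] EuclideanSpace ℝ (Fin d) :=
  LinearMap.toContinuousLinearMap (Matrix.toEuclideanLin M)

lemma Lm_apply (M : Matrix (Fin d) (Fin d) ℝ) (y : EuclideanSpace ℝ (Fin d)) (i : Fin d) :
    Lm M y i = ∑ j, M i j * y j := by
  simp [Lm, Matrix.toEuclideanLin_apply, Matrix.mulVec, dotProduct]


lemma inner_Lm (M : Matrix (Fin d) (Fin d) ℝ) (hM : M.IsSymm)
    (u w : EuclideanSpace ℝ (Fin d)) : ⟪u, Lm M w⟫ = ⟪Lm M u, w⟫ := by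
  simp only [PiLp.inner_apply, RCLike.inner_apply, conj_trivial, Lm_apply,
    Finset.mul_sum, Finset.sum_mul]
  rw [Finset.sum_comm]
  refine Finset.sum_congr rfl fun j _ => ?_
  refine Finset.sum_congr rfl fun i _ => ?_
  have hij : M i j = M j i := by rw [← hM.apply i j]
  rw [hij]; ring

lemma f_eq (M : Matrix (Fin d) (Fin d) ℝ) (x : EuclideanSpace ℝ (Fin d)) :
    (1/2 : ℝ) * ∑ i, ∑ j, (x i * x j - M i j)^2
      = (1/2) * ⟪x,x⟫^2 - ⟪x, Lm M x⟫ + (1/2) * ∑ i, ∑ j, (M i j)^2 := by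
  have h1 : (⟪x,x⟫ : ℝ) = ∑ i, x i * x i := by
    rw [PiLp.inner_apply]
    exact Finset.sum_congr rfl fun i _ => by simp only [RCLike.inner_apply, conj_trivial, mul_comm]
  have h2 : ⟪x, Lm M x⟫ = ∑ i, ∑ j, x i * (M i j * x j) := by
    simp [PiLp.inner_apply, RCLike.inner_apply, Lm_apply, Finset.mul_sum]
    exact Finset.sum_congr rfl fun i _ => by rw [Finset.sum_mul]; exact Finset.sum_congr rfl fun j _ => by ring
  rw [h1, h2, sq, Finset.sum_mul_sum]
  simp only [Finset.mul_sum, ← Finset.sum_sub_distrib, ← Finset.sum_add_distrib]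
  refine Finset.sum_congr rfl fun i _ => Finset.sum_congr rfl fun j _ => by ring

lemma hasGrad (M : Matrix (Fin d) (Fin d) ℝ) (hM : M.IsSymm) (y : EuclideanSpace ℝ (Fin d)) :
    HasGradientAt (fun x : EuclideanSpace ℝ (Fin d) =>
        (1/2 : ℝ) * ∑ i, ∑ j, (x i * x j - M i j)^2)
      ((2 * ⟪y,y⟫) • y - (2:ℝ) • (Lm M y)) y := by
  have hfe : (fun x : EuclideanSpace ℝ (Fin d) =>
      (1/2 : ℝ) * ∑ i, ∑ j, (x i * x j - M i j)^2)
      = fun x => (1/2) * ⟪x,x⟫^2 - ⟪x, Lm M x⟫ + (1/2) * ∑ i, ∑ j, (M i j)^2 :=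
    funext (f_eq M)
  rw [hfe, hasGradientAt_iff_hasFDerivAt]
  have hq : HasFDerivAt (fun x : EuclideanSpace ℝ (Fin d) => (⟪x,x⟫ : ℝ)) _ y :=
    (hasFDerivAt_id y).inner ℝ (hasFDerivAt_id y)
  have hr : HasFDerivAt (fun x : EuclideanSpace ℝ (Fin d) => (⟪x, Lm M x⟫ : ℝ)) _ y :=
    (hasFDerivAt_id y).inner ℝ ((Lm M).hasFDerivAt)
  have hD := (((hq.mul hq).const_mul (1/2 : ℝ)).sub hr).add_const
    ((1/2 : ℝ) * ∑ i, ∑ j, (M i j)^2)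
  have heq : ∀ x : EuclideanSpace ℝ (Fin d),
      (1/2 : ℝ) * ⟪x,x⟫^2 = (1/2 : ℝ) * (⟪x,x⟫ * ⟪x,x⟫) := by intro x; ring
  simp only [heq] at hD ⊢
  refine hD.congr_fderiv ?_
  apply ContinuousLinearMap.ext; intro u
  simp only [InnerProductSpace.toDual_apply_apply, ContinuousLinearMap.add_apply,
    ContinuousLinearMap.sub_apply, ContinuousLinearMap.smul_apply,
    ContinuousLinearMap.comp_apply, ContinuousLinearMap.prod_apply,
    ContinuousLinearMap.coe_id', id_eq, fderivInnerCLM_apply, ContinuousLinearMap.zero_apply,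
    smul_eq_mul, inner_sub_left, real_inner_smul_left]
  have h1 : ⟪u, Lm M y⟫ = ⟪Lm M y, u⟫ := real_inner_comm _ _
  have h2 : ⟪y, Lm M u⟫ = ⟪Lm M y, u⟫ := by rw [inner_Lm M hM, real_inner_comm]
  have h3 : ⟪u, y⟫ = ⟪y, u⟫ := real_inner_comm _ _
  rw [h1, h2, h3]; ring

lemma grad2 (M : Matrix (Fin d) (Fin d) ℝ) (x u : EuclideanSpace ℝ (Fin d)) :
    fderiv ℝ (fun y : EuclideanSpace ℝ (Fin d) => (2 * ⟪y,y⟫) • y - (2:ℝ) • (Lm M y)) x u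
      = (4 * ⟪x,u⟫) • x + (2 * ⟪x,x⟫) • u - (2:ℝ) • Lm M u := by
  have hq : HasFDerivAt (fun y : EuclideanSpace ℝ (Fin d) => (⟪y,y⟫ : ℝ)) _ x :=
    (hasFDerivAt_id x).inner ℝ (hasFDerivAt_id x)
  have hD := ((hq.const_mul (2:ℝ)).smul (hasFDerivAt_id x)).sub
    (((Lm M).hasFDerivAt).const_smul (2:ℝ))
  simp only [id_eq] at hD
  rw [HasFDerivAt.fderiv (f := fun y : EuclideanSpace ℝ (Fin d) => (2 * ⟪y,y⟫) • y - (2:ℝ) • (Lm M y)) hD]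
  simp only [ContinuousLinearMap.sub_apply, ContinuousLinearMap.add_apply,
    ContinuousLinearMap.smul_apply, ContinuousLinearMap.smulRight_apply,
    ContinuousLinearMap.comp_apply, ContinuousLinearMap.prod_apply,
    ContinuousLinearMap.coe_id', id_eq, fderivInnerCLM_apply, smul_eq_mul]
  have h3 : ⟪u, x⟫ = ⟪x, u⟫ := real_inner_comm _ _
  rw [h3]
  module

/-- For a symmetric PSD matrix `M` with eigengap `λ₁ > λ₂ ≥ 0` between its
top two eigenvalues, every stationary point of `f(x) = (1/2)‖xxᵀ - M‖_F²` other than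
`±√λ₁ • v₁` satisfies `v₁ᵀ ∇²f(x†) v₁ ≤ λ₂ - λ₁ < 0`; in particular it is a strict
saddle point. -/
theorem other_stationary_points_are_strict_saddles
    (d : ℕ) (hd : 2 ≤ d) (M : Matrix (Fin d) (Fin d) ℝ)
    (hpsd : M.PosSemidef)
    (lam : Fin d → ℝ) (v : Fin d → EuclideanSpace ℝ (Fin d))
    (hortho : Orthonormal ℝ v)
    (heig : ∀ i, M.mulVec (v i) = lam i • v i)
    (hmono : ∀ i j : Fin d, i ≤ j → lam j ≤ lam i)
    (hgap : lam ⟨1, by omega⟩ < lam ⟨0, by omega⟩)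
    (hnn : 0 ≤ lam ⟨1, by omega⟩)
    (f : EuclideanSpace ℝ (Fin d) → ℝ)
    (hf : f = fun x => (1 / 2) * ∑ i, ∑ j, (x i * x j - M i j) ^ 2)
    (x : EuclideanSpace ℝ (Fin d))
    (hgrad : gradient f x = 0)
    (hne₁ : x ≠ Real.sqrt (lam ⟨0, by omega⟩) • v ⟨0, by omega⟩)
    (hne₂ : x ≠ -(Real.sqrt (lam ⟨0, by omega⟩)) • v ⟨0, by omega⟩) :
    ⟪v ⟨0, by omega⟩, (fderiv ℝ (gradient f) x) (v ⟨0, by omega⟩)⟫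
        ≤ lam ⟨1, by omega⟩ - lam ⟨0, by omega⟩ ∧
      lam ⟨1, by omega⟩ - lam ⟨0, by omega⟩ < 0 ∧
      ∃ u : EuclideanSpace ℝ (Fin d), u ≠ 0 ∧ ⟪u, (fderiv ℝ (gradient f) x) u⟫ < 0 := by
  set i0 : Fin d := ⟨0, by omega⟩ with hi0
  set i1 : Fin d := ⟨1, by omega⟩ with hi1
  have hM : M.IsSymm := by
    have h := hpsd.1
    rwa [Matrix.IsHermitian, Matrix.conjTranspose_eq_transpose_of_trivial] at h
  haveI : Nonempty (Fin d) := ⟨⟨0, by omega⟩⟩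
  -- eigenvectors for Lm
  have hLv : ∀ i, Lm M (v i) = lam i • v i := by
    intro i
    ext k
    rw [Lm_apply]
    have := congrFun (heig i) k
    simpa [Matrix.mulVec, dotProduct] using this
  -- gradient formula
  have hgf : gradient f = fun y : EuclideanSpace ℝ (Fin d) =>
      (2 * ⟪y,y⟫) • y - (2:ℝ) • (Lm M y) := by
    funext y
    have := hasGrad M hM y
    rw [hf]
    exact this.gradient
  -- stationarity
  have hstat : (2 * ⟪x,x⟫) • x - (2:ℝ) • (Lm M x) = 0 := by
    have h := hgrad
    rw [hgf] at h
    simpa using h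
  have hLx : Lm M x = ⟪x,x⟫ • x := by
    have h2 : (2 * ⟪x,x⟫) • x = (2:ℝ) • Lm M x := by rwa [sub_eq_zero] at hstat
    calc Lm M x = (2:ℝ)⁻¹ • ((2:ℝ) • Lm M x) := by rw [smul_smul]; norm_num
      _ = (2:ℝ)⁻¹ • ((2 * ⟪x,x⟫) • x) := by rw [h2]
      _ = ⟪x,x⟫ • x := by rw [smul_smul]; congr 1; ring
  -- orthonormal basis
  have hcard : Fintype.card (Fin d) = Module.finrank ℝ (EuclideanSpace ℝ (Fin d)) := by
    simp
  have hsp : ⊤ ≤ Submodule.span ℝ (Set.range v) := by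
    rw [← coe_basisOfLinearIndependentOfCardEqFinrank hortho.linearIndependent hcard]
    exact (basisOfLinearIndependentOfCardEqFinrank hortho.linearIndependent hcard).span_eq.ge
  let b : OrthonormalBasis (Fin d) ℝ (EuclideanSpace ℝ (Fin d)) := OrthonormalBasis.mk hortho hsp
  have hb : ∀ i, b i = v i := fun i => by simp [b]
  -- eigen inner identities
  have hvLx : ∀ i, lam i * ⟪v i, x⟫ = ⟪x,x⟫ * ⟪v i, x⟫ := by
    intro i
    have h1 : ⟪v i, Lm M x⟫ = lam i * ⟪v i, x⟫ := by
      rw [inner_Lm M hM, hLv, real_inner_smul_left]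
    have h2 : ⟪v i, Lm M x⟫ = ⟪x,x⟫ * ⟪v i, x⟫ := by
      rw [hLx, real_inner_smul_right]
    rw [← h1, h2]
  have hvv : ∀ i, ⟪v i, v i⟫ = 1 := by
    intro i
    rw [real_inner_self_eq_norm_sq, hortho.1 i]; norm_num
  have hl0pos : 0 < lam i0 := lt_of_le_of_lt hnn hgap
  -- key orthogonality
  have hvx0 : ⟪v i0, x⟫ = 0 := by
    by_contra hc
    have hxx : ⟪x,x⟫ = lam i0 := (mul_right_cancel₀ hc (hvLx i0)).symm
    have hci : ∀ i, i ≠ i0 → ⟪v i, x⟫ = 0 := by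
      intro i hi
      have h1le : i1 ≤ i := by
        rw [hi1]
        have : (0:ℕ) < i.val := by
          rcases Nat.eq_zero_or_pos i.val with h | h
          · exact absurd (Fin.ext h) hi
          · exact h
        exact Fin.mk_le_of_le_val this
      have hlt : lam i < lam i0 := lt_of_le_of_lt (hmono i1 i h1le) hgap
      have := hvLx i
      rw [hxx] at this
      by_contra hc'
      exact absurd (mul_right_cancel₀ hc' this) (ne_of_lt hlt)
    have hxe : x = ⟪v i0, x⟫ • v i0 := by
      have hsum := b.sum_repr' x
      simp_rw [hb] at hsum
      have h2 : ∑ i, ⟪v i, x⟫ • v i = ⟪v i0, x⟫ • v i0 :=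
        Finset.sum_eq_single i0 (fun i _ hi => by rw [hci i hi, zero_smul])
          (fun h => absurd (Finset.mem_univ i0) h)
      rw [← h2, hsum]
    have hsq : ⟪v i0, x⟫ ^ 2 = lam i0 := by
      have h5 : ⟪x, x⟫ = ⟪v i0, x⟫ * (⟪v i0, x⟫ * ⟪v i0, v i0⟫) := by
        conv_lhs => rw [hxe]
        rw [real_inner_smul_left, real_inner_smul_right]
      rw [hvv i0] at h5
      rw [← hxx, h5]; ring
    have habs : ⟪v i0, x⟫ = Real.sqrt (lam i0) ∨ ⟪v i0, x⟫ = -Real.sqrt (lam i0) := by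
      have h2 : ⟪v i0, x⟫ ^ 2 = (Real.sqrt (lam i0)) ^ 2 := by
        rw [Real.sq_sqrt hl0pos.le, hsq]
      exact sq_eq_sq_iff_eq_or_eq_neg.mp h2
    rcases habs with h | h
    · exact hne₁ (by rw [hxe, h])
    · exact hne₂ (by rw [hxe, h])
  -- norm bound
  have hxx_le : ⟪x,x⟫ ≤ lam i1 := by
    rcases eq_or_ne x 0 with h0 | h0
    · rw [h0]; simpa using hnn
    · have hxpos : (0:ℝ) < ⟪x,x⟫ := lt_of_le_of_ne real_inner_self_nonneg
          (Ne.symm fun h => h0 ((@inner_self_eq_zero ℝ _ _ _ _ x).mp h))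
      have hpars : ⟪x, x⟫ = ∑ i, ⟪v i, x⟫ * ⟪v i, x⟫ := by
        have := b.sum_inner_mul_inner x x
        simp_rw [hb] at this
        rw [← this]
        refine Finset.sum_congr rfl fun i _ => ?_
        rw [real_inner_comm x (v i)]
      have hpars2 : ⟪x,x⟫ * ⟪x,x⟫ = ∑ i, lam i * (⟪v i, x⟫ * ⟪v i, x⟫) := by
        have h1 : ⟪x, Lm M x⟫ = ⟪x,x⟫ * ⟪x,x⟫ := by rw [hLx, real_inner_smul_right]
        have h2 := b.sum_inner_mul_inner x (Lm M x)
        simp_rw [hb] at h2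
        rw [← h1, ← h2]
        refine Finset.sum_congr rfl fun i _ => ?_
        have h3 : ⟪v i, Lm M x⟫ = ⟪x,x⟫ * ⟪v i, x⟫ := by rw [hLx, real_inner_smul_right]
        rw [h3, ← hvLx i, real_inner_comm x (v i)]
        ring
      have hbound : ∑ i, lam i * (⟪v i, x⟫ * ⟪v i, x⟫)
          ≤ ∑ i, lam i1 * (⟪v i, x⟫ * ⟪v i, x⟫) := by
        refine Finset.sum_le_sum fun i _ => ?_
        rcases eq_or_ne i i0 with h | h
        · rw [h, hvx0]; ring_nf; exact le_refl _
        · have h1le : i1 ≤ i := by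
            rw [hi1]
            have : (0:ℕ) < i.val := by
              rcases Nat.eq_zero_or_pos i.val with hh | hh
              · exact absurd (Fin.ext hh) h
              · exact hh
            exact Fin.mk_le_of_le_val this
          exact mul_le_mul_of_nonneg_right (hmono i1 i h1le) (mul_self_nonneg _)
      have : ⟪x,x⟫ * ⟪x,x⟫ ≤ lam i1 * ⟪x,x⟫ := by
        rw [hpars2, hpars]
        rw [Finset.mul_sum]
        exact hbound
      exact le_of_mul_le_mul_right (by rwa [mul_comm ⟪x,x⟫] at this) hxpos
  -- final computation
  have hval : ⟪v i0, (fderiv ℝ (gradient f) x) (v i0)⟫ = 2 * ⟪x,x⟫ - 2 * lam i0 := by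
    rw [hgf, grad2]
    have hvx0' : ⟪x, v i0⟫ = 0 := by rw [real_inner_comm]; exact hvx0
    rw [inner_sub_right, inner_add_right, real_inner_smul_right, real_inner_smul_right,
      real_inner_smul_right, hLv, real_inner_smul_right, hvv, hvx0']
    ring
  refine ⟨by rw [hval]; linarith, by linarith, v i0, hortho.ne_zero i0, by rw [hval]; linarith⟩
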